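/- Fix x₀ ∈ ℝ and α, β > 0, and let μ = (α/(α+β)) δ₀ + (β/(α+β)) δ_{x₀} be the two-point mixture of Dirac masses at 0 and x₀. Then for t > 0, the density μ*γ_t on ℝ is log-concave if and only if t ≥ x₀²/4. -/

import Mathlib

noncomputable section
open Real MeasureTheory

/-- Centered Gaussian density on `ℝ` with variance `t`. -/
def gaussDensity1 (t x : ℝ) : ℝ :=
  (2 * π * t) ^ (-(1 : ℝ) / 2) * Real.exp (-x ^ 2 / (2 * t))

/-- The density of `μ * γ_t` for the two-point mixture
`μ = (α/(α+β)) δ₀ + (β/(α+β)) δ_{x₀}`. -/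
def twoPointHeat (α β x₀ t z : ℝ) : ℝ :=
  α / (α + β) * gaussDensity1 t z + β / (α + β) * gaussDensity1 t (z - x₀)

lemma gauss_pos {t : ℝ} (ht : 0 < t) (x : ℝ) : 0 < gaussDensity1 t x := by
  unfold gaussDensity1
  have h2 : (0:ℝ) < 2 * π * t := by positivity
  exact mul_pos (Real.rpow_pos_of_pos h2 _) (Real.exp_pos _)

lemma gauss_hasDerivAt {t : ℝ} (ht : 0 < t) (x : ℝ) :
    HasDerivAt (gaussDensity1 t) (-(x / t) * gaussDensity1 t x) x := by
  have hsq : HasDerivAt (fun x : ℝ => -x ^ 2 / (2 * t)) (-(x / t)) x := by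
    have h := ((hasDerivAt_pow 2 x).neg).div_const (2 * t)
    refine h.congr_deriv ?_
    field_simp
    ring
  have h := ((Real.hasDerivAt_exp (-x ^ 2 / (2 * t))).comp x hsq).const_mul
      ((2 * π * t) ^ (-(1 : ℝ) / 2))
  refine h.congr_deriv ?_
  unfold gaussDensity1
  ring

/-- **Proposition 9.** For `μ = (α/(α+β)) δ₀ + (β/(α+β)) δ_{x₀}` and `t > 0`, the density
`μ * γ_t` is log-concave (i.e. `-(log(μ*γ_t))'' ≥ 0` everywhere) if and only if
`t ≥ x₀²/4`. -/
theorem two_point_mixture_log_concave_iff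
    (x₀ α β : ℝ) (hα : 0 < α) (hβ : 0 < β) (t : ℝ) (ht : 0 < t) :
    (∀ z : ℝ, 0 ≤ -(deriv (deriv (fun y => Real.log (twoPointHeat α β x₀ t y))) z))
      ↔ x₀ ^ 2 / 4 ≤ t := by
  set a : ℝ := α / (α + β) with ha_def
  set b : ℝ := β / (α + β) with hb_def
  have ha : 0 < a := by positivity
  have hb : 0 < b := by positivity
  set G : ℝ → ℝ := gaussDensity1 t with hG_def
  set f : ℝ → ℝ := fun z => twoPointHeat α β x₀ t z with hf_def
  have hfpos : ∀ z, 0 < f z := by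
    intro z
    have := gauss_pos ht z
    have := gauss_pos ht (z - x₀)
    unfold f
    unfold twoPointHeat
    positivity
  set F1 : ℝ → ℝ := fun z => a * (-(z / t) * G z) + b * (-((z - x₀) / t) * G (z - x₀))
    with hF1_def
  set F2 : ℝ → ℝ := fun z =>
      a * ((-(1 / t)) * G z + (-(z / t)) * (-(z / t) * G z)) +
        b * ((-(1 / t)) * G (z - x₀) +
          (-((z - x₀) / t)) * (-((z - x₀) / t) * G (z - x₀))) with hF2_def
  -- first derivative of f
  have hGshift : ∀ z : ℝ, HasDerivAt (fun y : ℝ => G (y - x₀))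
      (-((z - x₀) / t) * G (z - x₀)) z := by
    intro z
    have h := (gauss_hasDerivAt ht (z - x₀)).comp z ((hasDerivAt_id z).sub_const x₀)
    exact h.congr_deriv (mul_one _)
  have hf' : ∀ z, HasDerivAt f (F1 z) z := by
    intro z
    have h1 := (gauss_hasDerivAt ht z).const_mul a
    have h2 := (hGshift z).const_mul b
    have h := h1.add h2
    unfold f F1
    unfold twoPointHeat
    exact h
  -- second derivative
  have hlin : ∀ z : ℝ, HasDerivAt (fun y : ℝ => -(y / t)) (-(1 / t)) z := by
    intro z
    exact ((hasDerivAt_id z).div_const t).neg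
  have hlin2 : ∀ z : ℝ, HasDerivAt (fun y : ℝ => -((y - x₀) / t)) (-(1 / t)) z := by
    intro z
    exact (((hasDerivAt_id z).sub_const x₀).div_const t).neg
  have hF1' : ∀ z, HasDerivAt F1 (F2 z) z := by
    intro z
    have h1 := ((hlin z).mul (gauss_hasDerivAt ht z)).const_mul a
    have h2 := ((hlin2 z).mul (hGshift z)).const_mul b
    have h := h1.add h2
    unfold F1 F2
    exact h
  -- log derivative
  have hlog : ∀ z, HasDerivAt (fun y => Real.log (twoPointHeat α β x₀ t y))
      (F1 z / f z) z := by
    intro z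
    exact (hf' z).log (hfpos z).ne'
  have hd1 : deriv (fun y => Real.log (twoPointHeat α β x₀ t y)) = fun z => F1 z / f z :=
    funext fun z => (hlog z).deriv
  have hd2 : ∀ z, deriv (deriv (fun y => Real.log (twoPointHeat α β x₀ t y))) z
      = (F2 z * f z - F1 z * F1 z) / (f z) ^ 2 := by
    intro z
    rw [hd1]
    exact ((hF1' z).div (hf' z) (hfpos z).ne').deriv
  -- key numeric identity
  have hnum : ∀ z, F2 z * f z - F1 z * F1 z
      = (a * b * G z * G (z - x₀) * (x₀ ^ 2 - 2 * t)
          - t * (a ^ 2 * (G z) ^ 2 + b ^ 2 * (G (z - x₀)) ^ 2)) / t ^ 2 := by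
    intro z
    have hfe : f z = a * G z + b * G (z - x₀) := rfl
    rw [hfe]
    unfold F1 F2
    field_simp
    ring
  have key : ∀ z, (0 ≤ -(deriv (deriv (fun y => Real.log (twoPointHeat α β x₀ t y))) z))
      ↔ a * b * G z * G (z - x₀) * (x₀ ^ 2 - 2 * t)
          ≤ t * (a ^ 2 * (G z) ^ 2 + b ^ 2 * (G (z - x₀)) ^ 2) := by
    intro z
    rw [hd2 z, hnum z, neg_nonneg]
    have hf2 : (0:ℝ) < (f z) ^ 2 := pow_pos (hfpos z) 2
    have ht2 : (0:ℝ) < t ^ 2 := pow_pos ht 2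
    rw [div_le_iff₀ hf2, zero_mul, div_le_iff₀ ht2, zero_mul, sub_nonpos]
  -- now reduce to the pointwise inequality
  have hGpos : ∀ x, 0 < G x := fun x => gauss_pos ht x
  constructor
  · intro h
    by_cases hx : x₀ = 0
    · subst hx; simpa using ht.le
    · -- pick z where a * G z = b * G (z - x₀)
      set L : ℝ := Real.log (β / α) with hL_def
      set z : ℝ := (x₀ ^ 2 - 2 * t * L) / (2 * x₀) with hz_def
      have hexp : -z ^ 2 / (2 * t) = -(z - x₀) ^ 2 / (2 * t) + L := by
        have h1 : (z - x₀) ^ 2 - z ^ 2 = 2 * t * L := by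
          unfold z
          field_simp
          ring
        field_simp
        nlinarith [h1]
      have heq : a * G z = b * G (z - x₀) := by
        unfold G a b
        unfold gaussDensity1
        rw [hexp, Real.exp_add, Real.exp_log (by positivity : (0:ℝ) < β / α)]
        field_simp
      have h2 := (key z).mp (h z)
      have hw : 0 < a * G z := mul_pos ha (hGpos z)
      have e1 : a * b * G z * G (z - x₀) * (x₀ ^ 2 - 2 * t)
          = (a * G z) ^ 2 * (x₀ ^ 2 - 2 * t) := by
        rw [show a * b * G z * G (z - x₀) = (a * G z) * (b * G (z - x₀)) by ring, ← heq]
        ring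
      have e2 : t * (a ^ 2 * G z ^ 2 + b ^ 2 * G (z - x₀) ^ 2)
          = 2 * t * (a * G z) ^ 2 := by
        rw [show a ^ 2 * G z ^ 2 + b ^ 2 * G (z - x₀) ^ 2
            = (a * G z) ^ 2 + (b * G (z - x₀)) ^ 2 by ring, ← heq]
        ring
      rw [e1, e2] at h2
      nlinarith [mul_pos hw hw, h2]
  · intro ht4 z
    rw [key z]
    have hu := hGpos z
    have hv := hGpos (z - x₀)
    nlinarith [mul_nonneg ht.le (sq_nonneg (a * G z - b * G (z - x₀))),
      mul_nonneg (mul_nonneg (mul_nonneg (mul_nonneg ha.le hb.le) hu.le) hv.le)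
        (by linarith : (0:ℝ) ≤ 4 * t - x₀ ^ 2)]
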